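/- For any g, m ∈ (0,1), the function a ↦ −(a − g)(a − m)/(a(1−a)) is strictly concave on (0,1) and attains its maximum over (0,1) at the unique point a* = ψ(m) = √(g·m)/(√(g·m) + √((1−g)(1−m))). -/

import Mathlib

open Set

/-- `ψ(m) = √(gm) / (√(gm) + √((1−g)(1−m)))`. -/
noncomputable def psi (g m : ℝ) : ℝ :=
  Real.sqrt (g * m) / (Real.sqrt (g * m) + Real.sqrt ((1 - g) * (1 - m)))

lemma inv_strict_cvx {x y a b : ℝ} (hx : 0 < x) (hy : 0 < y) (hxy : x ≠ y)
    (ha : 0 < a) (hb : 0 < b) (hab : a + b = 1) :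
    1 / (a * x + b * y) < a * (1 / x) + b * (1 / y) := by
  have hsq : 0 < (x - y)^2 :=
    lt_of_le_of_ne (sq_nonneg _) (Ne.symm (pow_ne_zero 2 (sub_ne_zero.mpr hxy)))
  have e : (a * y + x * b) * (a * x + b * y) = x * y + a * b * (x - y) ^ 2 := by
    linear_combination (x * y * (a + b + 1)) * hab
  rw [mul_one_div, mul_one_div, div_add_div _ _ hx.ne' hy.ne',
    div_lt_div_iff₀ (by positivity) (by positivity)]
  nlinarith [mul_pos (mul_pos ha hb) hsq, e]

lemma h_strict_concave {p q : ℝ} (hp : 0 < p) (hq : 0 < q) :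
    StrictConcaveOn ℝ (Ioo (0 : ℝ) 1) (fun a => 1 - p / a - q / (1 - a)) := by
  refine ⟨convex_Ioo 0 1, fun x hx y hy hxy a b ha hb hab => ?_⟩
  simp only [smul_eq_mul]
  have hx0 := hx.1; have hx1 : 0 < 1 - x := by linarith [hx.2]
  have hy0 := hy.1; have hy1 : 0 < 1 - y := by linarith [hy.2]
  have k1 : 1 / (a * x + b * y) < a * (1 / x) + b * (1 / y) :=
    inv_strict_cvx hx0 hy0 hxy ha hb hab
  have k2 : 1 / (a * (1 - x) + b * (1 - y)) < a * (1 / (1 - x)) + b * (1 / (1 - y)) :=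
    inv_strict_cvx hx1 hy1 (fun h => hxy (by linarith)) ha hb hab
  have e1 : 1 - (a * x + b * y) = a * (1 - x) + b * (1 - y) := by ring_nf; linarith
  rw [e1]
  have kp : p / (a * x + b * y) < a * (p / x) + b * (p / y) := by
    calc p / (a * x + b * y) = p * (1 / (a * x + b * y)) := by ring
    _ < p * (a * (1 / x) + b * (1 / y)) := (mul_lt_mul_iff_right₀ hp).mpr k1
    _ = a * (p / x) + b * (p / y) := by ring
  have kq : q / (a * (1 - x) + b * (1 - y)) < a * (q / (1 - x)) + b * (q / (1 - y)) := by
    calc q / (a * (1 - x) + b * (1 - y)) = q * (1 / (a * (1 - x) + b * (1 - y))) := by ring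
    _ < q * (a * (1 / (1 - x)) + b * (1 / (1 - y))) := (mul_lt_mul_iff_right₀ hq).mpr k2
    _ = a * (q / (1 - x)) + b * (q / (1 - y)) := by ring
  nlinarith

lemma strictConcaveOn_congr {s : Set ℝ} {f h : ℝ → ℝ} (hf : StrictConcaveOn ℝ s h)
    (he : EqOn f h s) : StrictConcaveOn ℝ s f := by
  refine ⟨hf.1, fun x hx y hy hxy a b ha hb hab => ?_⟩
  rw [he hx, he hy, he (hf.1 hx hy ha.le hb.le hab)]
  exact hf.2 hx hy hxy ha hb hab

/-- For `g, m ∈ (0,1)`, the fair-odds profit `a ↦ −(a−g)(a−m)/(a(1−a))` is strictly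
concave on `(0,1)` and attains its maximum over `(0,1)` at the unique point `ψ(m)`. -/
theorem fair_odds_unique_maximiser (g m : ℝ) (hg : g ∈ Ioo (0 : ℝ) 1)
    (hm : m ∈ Ioo (0 : ℝ) 1) :
    StrictConcaveOn ℝ (Ioo (0 : ℝ) 1) (fun a => -((a - g) * (a - m)) / (a * (1 - a))) ∧
      psi g m ∈ Ioo (0 : ℝ) 1 ∧
      IsMaxOn (fun a => -((a - g) * (a - m)) / (a * (1 - a))) (Ioo (0 : ℝ) 1) (psi g m) ∧
      ∀ x ∈ Ioo (0 : ℝ) 1,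
        IsMaxOn (fun a => -((a - g) * (a - m)) / (a * (1 - a))) (Ioo (0 : ℝ) 1) x →
          x = psi g m := by
  obtain ⟨hg0, hg1⟩ := hg
  obtain ⟨hm0, hm1⟩ := hm
  set p : ℝ := g * m with hpdef
  set q : ℝ := (1 - g) * (1 - m) with hqdef
  have hp : 0 < p := mul_pos hg0 hm0
  have hq : 0 < q := mul_pos (by linarith) (by linarith)
  set s : ℝ := Real.sqrt p with hsdef
  set t : ℝ := Real.sqrt q with htdef
  have hs : 0 < s := Real.sqrt_pos.mpr hp
  have ht : 0 < t := Real.sqrt_pos.mpr hq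
  have hs2 : s ^ 2 = p := Real.sq_sqrt hp.le
  have ht2 : t ^ 2 = q := Real.sq_sqrt hq.le
  have hst : 0 < s + t := by linarith
  have hpsi : psi g m = s / (s + t) := rfl
  have hpsi_mem : psi g m ∈ Ioo (0 : ℝ) 1 := by
    rw [hpsi]
    constructor
    · positivity
    · rw [div_lt_one hst]; linarith
  -- EqOn
  have heq : EqOn (fun a : ℝ => -((a - g) * (a - m)) / (a * (1 - a)))
      (fun a : ℝ => 1 - p / a - q / (1 - a)) (Ioo (0 : ℝ) 1) := by
    intro a ha
    have ha0 : a ≠ 0 := ha.1.ne'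
    have ha1 : (1 : ℝ) - a ≠ 0 := by have := ha.2; intro h; linarith [sub_eq_zero.mp h]
    simp only [hpdef, hqdef]
    field_simp
    ring
  have hconc := strictConcaveOn_congr (h_strict_concave hp hq) heq
  -- value at psi
  have h1psi : 1 - s / (s + t) = t / (s + t) := by field_simp; ring
  have hval : (1 : ℝ) - p / (s / (s + t)) - q / (1 - s / (s + t)) = 1 - (s + t) ^ 2 := by
    rw [h1psi, ← hs2, ← ht2]
    field_simp
    ring
  have hmax : IsMaxOn (fun a : ℝ => -((a - g) * (a - m)) / (a * (1 - a)))
      (Ioo (0 : ℝ) 1) (psi g m) := by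
    intro x hx
    simp only [mem_setOf_eq]
    rw [show -((x - g) * (x - m)) / (x * (1 - x)) = 1 - p / x - q / (1 - x) from heq hx,
      show -((psi g m - g) * (psi g m - m)) / (psi g m * (1 - psi g m))
          = 1 - p / psi g m - q / (1 - psi g m) from heq hpsi_mem, hpsi, hval]
    have hx0 := hx.1
    have hx1 : 0 < 1 - x := by linarith [hx.2]
    have key : (s + t) ^ 2 * (x * (1 - x)) ≤ p * (1 - x) + q * x := by
      nlinarith [sq_nonneg (s * (1 - x) - t * x)]
    have hsum : p / x + q / (1 - x) = (p * (1 - x) + q * x) / (x * (1 - x)) := by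
      field_simp
      try ring
    have : (s + t) ^ 2 ≤ p / x + q / (1 - x) := by
      rw [hsum, le_div_iff₀ (by positivity)]
      exact key
    linarith
  refine ⟨hconc, hpsi_mem, hmax, fun x hx hxmax => ?_⟩
  exact hconc.eq_of_isMaxOn hxmax hmax hx hpsi_mem
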